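/- Let O be a Dedekind domain with field of fractions F and an involution (conjugation), and let S ⊆ V be a full O-lattice in a finite-dimensional F-vector space V equipped with a non-degenerate hermitian form taking O-values on S. Let S♯ = {x ∈ V : (x,y) ∈ O for all y ∈ S} be the dual lattice, and let G ⊆ S be a full sublattice. Then G♯/S♯ is isomorphic as an O-module to the conjugate module of S/G. -/

import Mathlib

open Submodule

theorem stmt_core (O F V : Type*) [CommRing O] [IsDomain O] [IsPrincipalIdealRing O]
    [Field F] [Algebra O F] [IsFractionRing O F]
    [AddCommGroup V] [Module F V] [Module O V] [IsScalarTower O F V]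
    [FiniteDimensional F V]
    (σ : O ≃+* O) (hσ : ∀ c, σ (σ c) = c)
    (σF : F ≃+* F)
    (hcompat : ∀ c : O, σF (algebraMap O F c) = algebraMap O F (σ c))
    (B : V → V → F)
    (hadd1 : ∀ x y z, B (x + y) z = B x z + B y z)
    (hadd2 : ∀ x y z, B x (y + z) = B x y + B x z)
    (hsmul1 : ∀ (c : F) (x y : V), B (c • x) y = c * B x y)
    (hsmul2 : ∀ (c : F) (x y : V), B x (c • y) = σF c * B x y)
    (hnd : ∀ x, (∀ y, B x y = 0) → x = 0)
    (S G : Submodule O V) (hGS : G ≤ S) (hSfg : S.FG)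
    (hSfull : Submodule.span F (S : Set V) = ⊤)
    (hGfull : Submodule.span F (G : Set V) = ⊤)
    (Sd Gd : Submodule O V)
    (hSd : ∀ x : V, x ∈ Sd ↔ ∀ y ∈ S, B x y ∈ (algebraMap O F).range)
    (hGd : ∀ x : V, x ∈ Gd ↔ ∀ y ∈ G, B x y ∈ (algebraMap O F).range) :
    ∃ φ : (↥Gd ⧸ Submodule.comap Gd.subtype Sd) ≃+
        (↥S ⧸ Submodule.comap S.subtype G),
      ∀ (c : O) (x : ↥Gd ⧸ Submodule.comap Gd.subtype Sd),
        φ (c • x) = σ c • φ x := by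
  classical
  have hAinj : Function.Injective (algebraMap O F) := IsFractionRing.injective O F
  set A := algebraMap O F with hA
  -- basic form lemmas
  have hB02 : ∀ x, B x 0 = 0 := by
    intro x
    have h := hadd2 x 0 0
    rw [add_zero] at h
    exact (left_eq_add.mp h)
  have hB01 : ∀ y, B 0 y = 0 := by
    intro y
    have h := hadd1 0 0 y
    rw [add_zero] at h
    exact (left_eq_add.mp h)
  -- S is finite free over O
  haveI : Module.Finite O ↥S := Module.Finite.iff_fg.mpr (by simpa using hSfg)
  haveI : NoZeroSMulDivisors O ↥S := by
    constructor
    rintro c x h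
    by_cases hc : c = 0
    · exact Or.inl hc
    · refine Or.inr (Subtype.ext ?_)
      have h2 : c • (x : V) = 0 := by
        rw [← Submodule.coe_smul, h, Submodule.coe_zero]
      have h3 : A c • (x : V) = 0 := by rwa [algebraMap_smul]
      rcases smul_eq_zero.mp h3 with h4 | h4
      · exact absurd (hAinj (by rwa [map_zero])) hc
      · simpa using h4
  let ι := Module.Free.ChooseBasisIndex O ↥S
  have Bsum2 : ∀ (x : V) (s : Finset ι) (y : ι → V),
      B x (∑ j ∈ s, y j) = ∑ j ∈ s, B x (y j) := by
    intro x s y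
    induction s using Finset.induction with
    | empty => simpa using hB02 x
    | insert _ _ h ih => rw [Finset.sum_insert h, hadd2, ih, Finset.sum_insert h]
  have Bsum1 : ∀ (y : V) (s : Finset ι) (x : ι → V),
      B (∑ j ∈ s, x j) y = ∑ j ∈ s, B (x j) y := by
    intro y s x
    induction s using Finset.induction with
    | empty => simpa using hB01 y
    | insert _ _ h ih => rw [Finset.sum_insert h, hadd1, ih, Finset.sum_insert h]
  let bS : Module.Basis ι O ↥S := Module.Free.chooseBasis O ↥S
  set G₀ : Submodule O ↥S := G.comap S.subtype with hG₀
  obtain ⟨n, ⟨bM, bN, f, a, snf⟩⟩ := Submodule.smithNormalForm bS G₀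
  set v : ι → V := fun i => ((bM i : ↥S) : V) with hv
  have livO : LinearIndependent O v :=
    bM.linearIndependent.map' S.subtype (Submodule.ker_subtype S)
  have livF : LinearIndependent F v := LinearIndependent.localization F (nonZeroDivisors O) livO
  have hspanOv : span O (Set.range v) = S := by
    have h1 : Set.range v = S.subtype '' Set.range ⇑bM := by
      ext x; simp [hv, Set.range_comp]
    rw [h1, ← Submodule.map_span, Module.Basis.span_eq, Submodule.map_top, Submodule.range_subtype]
  have hspanFv : span F (Set.range v) = ⊤ := by
    have h1 : (S : Set V) ⊆ ↑(span F (Set.range v)) := by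
      rw [← hspanOv]
      intro x hx
      exact span_subset_span O F _ hx
    refine eq_top_iff.mpr ?_
    rw [← hSfull]
    exact (span_mono h1).trans_eq (span_eq _)
  let bV : Module.Basis ι F V := Module.Basis.mk livF (by rw [hspanFv])
  have hbV : ∀ i, bV i = v i := fun i => by simp [bV]
  set rv : V → (ι → F) := fun x => bV.equivFun x with hrv
  have hrepr : ∀ x : V, x = ∑ i, rv x i • v i := by
    intro x
    conv_lhs => rw [← bV.equivFun.symm_apply_apply x]
    rw [Module.Basis.equivFun_symm_apply]
    exact Finset.sum_congr rfl fun i _ => by rw [hbV]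
  have hcoords : ∀ g : ι → F, rv (∑ i, g i • v i) = g := by
    intro g
    have h1 : ∑ i, g i • v i = bV.equivFun.symm g := by
      rw [Module.Basis.equivFun_symm_apply]
      exact Finset.sum_congr rfl fun i _ => by rw [hbV]
    rw [hrv]
    simp only [h1, LinearEquiv.apply_symm_apply]
  -- membership in S via coordinates
  have M1 : ∀ x : V, x ∈ S ↔ ∀ i, ∃ o : O, rv x i = A o := by
    intro x
    constructor
    · intro hx
      rw [← hspanOv] at hx
      obtain ⟨c, hc⟩ := (mem_span_range_iff_exists_fun O).mp hx
      have hc' : ∑ i, A (c i) • v i = x := by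
        rw [← hc]
        exact Finset.sum_congr rfl fun i _ => by rw [algebraMap_smul]
      intro i
      exact ⟨c i, by rw [← hc', hcoords]⟩
    · intro h
      choose o ho using h
      have hx : x = ∑ i, o i • v i := by
        conv_lhs => rw [hrepr x]
        exact Finset.sum_congr rfl fun i _ => by rw [ho, algebraMap_smul]
      have hx' : ∑ i, o i • v i ∈ span O (Set.range v) :=
        sum_mem fun i _ => smul_mem _ _ (subset_span (Set.mem_range_self i))
      rw [hspanOv] at hx'
      rwa [← hx] at hx' 
  -- the image of bN in V
  set gv : Fin n → V := fun i => (((bN i : ↥G₀) : ↥S) : V) with hgv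
  have hgva : ∀ i, gv i = A (a i) • v (f i) := by
    intro i
    rw [hgv]
    simp only []
    have := snf i
    calc (((bN i : ↥G₀) : ↥S) : V) = ((a i • bM (f i) : ↥S) : V) := by rw [this]
    _ = a i • ((bM (f i) : ↥S) : V) := by rw [Submodule.coe_smul]
    _ = A (a i) • v (f i) := by rw [algebraMap_smul]
  have hgvG : ∀ i, gv i ∈ G := fun i => (bN i : ↥G₀).2
  have hspanOgv : span O (Set.range gv) = G := by
    have h1 : Set.range gv = S.subtype '' (G₀.subtype '' Set.range ⇑bN) := by
      ext x; simp [hgv, Set.range_comp]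
    rw [h1, ← Submodule.map_span, ← Submodule.map_span, Module.Basis.span_eq, Submodule.map_top,
      Submodule.range_subtype, hG₀, Submodule.map_comap_subtype]
    exact inf_eq_right.mpr hGS
  have hane : ∀ i, a i ≠ 0 := by
    intro i h0
    apply bN.ne_zero i
    have h1 : ((bN i : ↥G₀) : ↥S) = 0 := by rw [snf i, h0, zero_smul]
    exact Subtype.ext (by rw [h1]; rfl)
  -- f is surjective
  have fsurj : Function.Surjective f := by
    intro j
    by_contra hj
    have hj' : j ∉ Set.range f := by simpa using hj
    have h1 : (G : Set V) ⊆ ↑(span F (Set.range gv)) := by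
      rw [← hspanOgv]
      intro x hx
      exact span_subset_span O F _ hx
    have h2 : span F (Set.range gv) ≤ span F (v '' Set.range f) := by
      rw [span_le]
      rintro x ⟨i, rfl⟩
      rw [hgva i]
      exact smul_mem _ _ (subset_span ⟨f i, Set.mem_range_self i, rfl⟩)
    have h3 : span F (v '' Set.range f) = ⊤ := by
      refine eq_top_iff.mpr ?_
      rw [← hGfull]
      exact ((span_mono h1).trans_eq (span_eq _)).trans h2
    exact livF.notMem_span_image hj' (h3 ▸ Submodule.mem_top)
  let e : Fin n ≃ ι := Equiv.ofBijective f ⟨f.injective, fsurj⟩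
  have he : ∀ i, e i = f i := fun i => rfl
  set a' : ι → O := fun j => a (e.symm j) with ha'
  have ha'ne : ∀ j, a' j ≠ 0 := fun j => hane _
  have hgv' : ∀ j, gv (e.symm j) = A (a' j) • v j := by
    intro j
    rw [hgva, ha']
    congr 2
    rw [← he, Equiv.apply_symm_apply]
  -- membership in G via coordinates
  have M2 : ∀ x : V, x ∈ G ↔ ∀ j, ∃ m : O, rv x j = A (a' j * m) := by
    intro x
    constructor
    · intro hx
      rw [← hspanOgv] at hx
      obtain ⟨c, hc⟩ := (mem_span_range_iff_exists_fun O).mp hx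
      have hc' : ∑ j, A (a' j * c (e.symm j)) • v j = x := by
        rw [← hc]
        rw [← Equiv.sum_comp e.symm (fun i => c i • gv i)]
        refine Finset.sum_congr rfl fun j _ => ?_
        rw [hgv' j, mul_comm (a' j), map_mul, ← smul_smul, algebraMap_smul]
      intro j
      exact ⟨c (e.symm j), by rw [← hc', hcoords]⟩
    · intro h
      choose m hm using h
      have hx : x = ∑ j, m j • gv (e.symm j) := by
        conv_lhs => rw [hrepr x]
        refine Finset.sum_congr rfl fun j _ => ?_
        rw [hm, hgv' j, mul_comm (a' j), map_mul, ← smul_smul, algebraMap_smul]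
      rw [hx]
      exact sum_mem fun j _ => smul_mem _ _ (hgvG _)
  -- the dual basis w
  let Φ : V →ₗ[F] (ι → F) :=
    { toFun := fun x j => B x (v j)
      map_add' := fun x y => by funext j; exact hadd1 x y (v j)
      map_smul' := fun c x => by funext j; exact hsmul1 c x (v j) }
  have hΦinj : Function.Injective Φ := by
    refine (injective_iff_map_eq_zero Φ).mpr fun x hx => ?_
    refine hnd x fun y => ?_
    have h1 : B x y = ∑ j, σF (rv y j) * B x (v j) := by
      conv_lhs => rw [hrepr y]
      rw [Bsum2 x Finset.univ (fun j => rv y j • v j)]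
      exact Finset.sum_congr rfl fun j _ => hsmul2 _ _ _
    rw [h1]
    refine Finset.sum_eq_zero fun j _ => ?_
    have : B x (v j) = 0 := congrFun hx j
    rw [this, mul_zero]
  have hΦsurj : Function.Surjective Φ := by
    refine (LinearMap.injective_iff_surjective_of_finrank_eq_finrank ?_).mp hΦinj
    rw [Module.finrank_eq_card_basis bV, Module.finrank_fintype_fun_eq_card]
  let E : V ≃ₗ[F] (ι → F) := LinearEquiv.ofBijective Φ ⟨hΦinj, hΦsurj⟩
  let w : ι → V := fun i => E.symm (Pi.single i 1)
  have hw : ∀ i j, B (w i) (v j) = if j = i then 1 else 0 := by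
    intro i j
    have h1 : E (w i) = Pi.single i 1 := E.apply_symm_apply _
    have h2 : B (w i) (v j) = E (w i) j := rfl
    rw [h2, h1, Pi.single_apply]
  have hcoordsW : ∀ (g : ι → F) (i : ι), B (∑ j, g j • w j) (v i) = g i := by
    intro g i
    rw [Bsum1 (v i) Finset.univ (fun j => g j • w j)]
    have h1 : ∀ j, B (g j • w j) (v i) = g j * B (w j) (v i) := fun j => hsmul1 _ _ _
    calc ∑ j, B (g j • w j) (v i) = ∑ j, g j * (if i = j then 1 else 0) := by
          refine Finset.sum_congr rfl fun j _ => ?_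
          rw [h1 j, hw j i]
    _ = g i := by simp
  -- membership in the duals via coordinates
  have hBO : ∀ (x : V) (o : O) (y : V), B x (o • y) = A (σ o) * B x y := by
    intro x o y
    rw [← algebraMap_smul F o y, hsmul2, hcompat]
  have M3 : ∀ x : V, x ∈ Sd ↔ ∀ i, ∃ o : O, A o = B x (v i) := by
    intro x
    rw [hSd]
    constructor
    · intro h i
      obtain ⟨o, ho⟩ := h (v i) (hspanOv ▸ subset_span (Set.mem_range_self i))
      exact ⟨o, ho⟩
    · intro h y hy
      obtain ⟨c, hc⟩ := (mem_span_range_iff_exists_fun O).mp (hspanOv ▸ hy : y ∈ span O (Set.range v))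
      have h1 : B x y = ∑ i, A (σ (c i)) * B x (v i) := by
        rw [← hc, Bsum2 x Finset.univ (fun i => c i • v i)]
        exact Finset.sum_congr rfl fun i _ => hBO x (c i) (v i)
      rw [h1]
      exact Subring.sum_mem _ fun i _ => Subring.mul_mem _ ⟨σ (c i), rfl⟩ ((h i).imp fun o ho => ho)
  have M4 : ∀ x : V, x ∈ Gd ↔ ∀ j, ∃ o : O, A o = A (σ (a' j)) * B x (v j) := by
    intro x
    rw [hGd]
    constructor
    · intro h j
      have hm : gv (e.symm j) ∈ G := hgvG _
      obtain ⟨o, ho⟩ := h _ hm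
      refine ⟨o, ?_⟩
      rw [ho, hgv' j, hsmul2, hcompat]
    · intro h y hy
      obtain ⟨c, hc⟩ := (mem_span_range_iff_exists_fun O).mp (hspanOgv ▸ hy : y ∈ span O (Set.range gv))
      have hc' : y = ∑ j, (c (e.symm j)) • gv (e.symm j) := by
        rw [← hc, ← Equiv.sum_comp e.symm (fun i => c i • gv i)]
      have h1 : B x y = ∑ j, A (σ (c (e.symm j))) * (A (σ (a' j)) * B x (v j)) := by
        rw [hc', Bsum2 x Finset.univ (fun j => c (e.symm j) • gv (e.symm j))]
        refine Finset.sum_congr rfl fun j _ => ?_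
        rw [hBO, hgv' j, hsmul2, hcompat]
      rw [h1]
      exact Subring.sum_mem _ fun j _ =>
        Subring.mul_mem _ ⟨σ (c (e.symm j)), rfl⟩ ((h j).imp fun o ho => ho)
  -- nonvanishing
  have hAσne : ∀ j, A (σ (a' j)) ≠ 0 := by
    intro j h
    refine ha'ne j (σ.injective ?_)
    rw [map_zero]
    exact hAinj (by rw [h, map_zero])
  -- choose integral coefficients for elements of Gd
  have hpkex : ∀ (x : ↥Gd) (j : ι), ∃ o : O, A o = A (σ (a' j)) * B (x : V) (v j) :=
    fun x j => (M4 x).mp x.2 j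
  choose pk hpk using hpkex
  have pkadd : ∀ (x y : ↥Gd) (j : ι), pk (x + y) j = pk x j + pk y j := by
    intro x y j
    apply hAinj
    rw [map_add, hpk, hpk, hpk, Submodule.coe_add, hadd1, mul_add]
  have pksmul : ∀ (c : O) (x : ↥Gd) (j : ι), pk (c • x) j = c * pk x j := by
    intro c x j
    apply hAinj
    rw [map_mul, hpk, hpk]
    have h1 : ((c • x : ↥Gd) : V) = A c • (x : V) := by
      rw [Submodule.coe_smul, algebraMap_smul]
    rw [h1, hsmul1]
    ring
  let Ψ : ↥Gd → ↥S := fun x => ∑ j, σ (pk x j) • bM j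
  have hΨcoe : ∀ x : ↥Gd, ((Ψ x : ↥S) : V) = ∑ j, A (σ (pk x j)) • v j := by
    intro x
    show ((∑ j, σ (pk x j) • bM j : ↥S) : V) = _
    rw [Submodule.coe_sum]
    exact Finset.sum_congr rfl fun j _ => by rw [Submodule.coe_smul, algebraMap_smul]
  have hΨrv : ∀ x : ↥Gd, rv ((Ψ x : ↥S) : V) = fun j => A (σ (pk x j)) := by
    intro x; rw [hΨcoe, hcoords]
  let φ₀ : ↥Gd →ₛₗ[(σ : O →+* O)] (↥S ⧸ comap S.subtype G) :=
    { toFun := fun x => Submodule.Quotient.mk (Ψ x)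
      map_add' := by
        intro x y
        have h1 : Ψ (x + y) = Ψ x + Ψ y := by
          rw [← Finset.sum_add_distrib]
          exact Finset.sum_congr rfl fun j _ => by rw [pkadd, map_add, add_smul]
        show Submodule.Quotient.mk (Ψ (x + y)) =
          Submodule.Quotient.mk (Ψ x) + Submodule.Quotient.mk (Ψ y)
        rw [h1, Submodule.Quotient.mk_add]
      map_smul' := by
        intro c x
        have h1 : Ψ (c • x) = σ c • Ψ x := by
          show _ = σ c • ∑ j, σ (pk x j) • bM j
          rw [Finset.smul_sum]
          exact Finset.sum_congr rfl fun j _ => by rw [pksmul, map_mul, mul_smul]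
        show Submodule.Quotient.mk (Ψ (c • x)) = σ c • Submodule.Quotient.mk (Ψ x)
        rw [h1, Submodule.Quotient.mk_smul] }
  have hφ₀ : ∀ x : ↥Gd, φ₀ x = Submodule.Quotient.mk (Ψ x) := fun x => rfl
  have hker : ∀ x : ↥Gd, φ₀ x = 0 ↔ x ∈ comap Gd.subtype Sd := by
    intro x
    rw [hφ₀, Submodule.Quotient.mk_eq_zero]
    have h1 : Ψ x ∈ comap S.subtype G ↔ ((Ψ x : ↥S) : V) ∈ G := Iff.rfl
    rw [h1, M2, mem_comap]
    show _ ↔ (x : V) ∈ Sd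
    rw [M3]
    constructor
    · intro h j
      obtain ⟨m, hm⟩ := h j
      have hm' : A (σ (pk x j)) = A (a' j * m) :=
        (congrFun (hΨrv x) j).symm.trans hm
      have h2 : σ (pk x j) = a' j * m := hAinj hm'
      have h3 : pk x j = σ (a' j) * σ m := by
        have h4 := congrArg σ h2
        rw [hσ, map_mul] at h4
        exact h4
      refine ⟨σ m, ?_⟩
      have h4 := hpk x j
      rw [h3, map_mul] at h4
      exact mul_left_cancel₀ (hAσne j) h4
    · intro h j
      obtain ⟨o, ho⟩ := h j
      have h2 : A (pk x j) = A (σ (a' j) * o) := by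
        rw [map_mul, hpk, ← ho]
      have h3 : pk x j = σ (a' j) * o := hAinj h2
      refine ⟨σ o, ?_⟩
      have h4 : σ (pk x j) = a' j * σ o := by
        have h5 := congrArg σ h3
        rw [map_mul, hσ] at h5
        exact h5
      rw [congrFun (hΨrv x) j, h4]
  have hsurjφ : Function.Surjective φ₀ := by
    intro q
    obtain ⟨s, rfl⟩ := Submodule.Quotient.mk_surjective _ q
    have hs := (M1 (s : V)).mp s.2
    choose u hu using hs
    set x : V := ∑ j, (A (σ (u j)) * (A (σ (a' j)))⁻¹) • w j with hx
    have hBx : ∀ j, B x (v j) = A (σ (u j)) * (A (σ (a' j)))⁻¹ := fun j => hcoordsW _ j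
    have hxGd : x ∈ Gd := by
      rw [M4]
      intro j
      refine ⟨σ (u j), ?_⟩
      rw [hBx j]
      field_simp
      rw [mul_div_assoc, div_self (hAσne j), mul_one]
    have hpkx : ∀ j, pk ⟨x, hxGd⟩ j = σ (u j) := by
      intro j
      apply hAinj
      rw [hpk]
      show A (σ (a' j)) * B x (v j) = A (σ (u j))
      rw [hBx j]
      field_simp
      rw [mul_comm, mul_div_assoc, div_self (hAσne j), mul_one]
    have hΨx : Ψ ⟨x, hxGd⟩ = s := by
      apply Subtype.ext
      rw [hΨcoe]
      conv_rhs => rw [hrepr (s : V)]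
      refine Finset.sum_congr rfl fun j _ => ?_
      rw [hpkx j, hσ, hu j]
    exact ⟨⟨x, hxGd⟩, by rw [hφ₀, hΨx]⟩
  haveI : RingHomSurjective (σ : O →+* O) := ⟨σ.surjective⟩
  have hle : comap Gd.subtype Sd ≤ LinearMap.ker φ₀ := fun x hx => (hker x).mpr hx
  let L := Submodule.liftQ (comap Gd.subtype Sd) φ₀ hle
  have hLmk : ∀ x : ↥Gd, L (Submodule.Quotient.mk x) = φ₀ x := fun x => rfl
  have hLinj : Function.Injective L := by
    intro p q hpq
    obtain ⟨xp, rfl⟩ := Submodule.Quotient.mk_surjective _ p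
    obtain ⟨xq, rfl⟩ := Submodule.Quotient.mk_surjective _ q
    rw [hLmk, hLmk] at hpq
    rw [Submodule.Quotient.eq]
    apply (hker _).mp
    rw [LinearMap.map_sub, hpq, sub_self]
  have hLsurj : Function.Surjective L := by
    intro q
    obtain ⟨x, hxq⟩ := hsurjφ q
    exact ⟨Submodule.Quotient.mk x, by rw [hLmk, hxq]⟩
  refine ⟨AddEquiv.ofBijective L ⟨hLinj, hLsurj⟩, ?_⟩
  intro c x
  show L (c • x) = σ c • L x
  rw [LinearMap.map_smulₛₗ]
  rfl

set_option maxHeartbeats 2000000 in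
set_option synthInstance.maxHeartbeats 200000 in
/-- Let `O` be a Dedekind domain with involution `σ`, `F` its fraction field
with compatible involution `σF`, and `V` a finite-dimensional `F`-vector space
with a non-degenerate hermitian (sesquilinear) form `B`. Let `G ⊆ S` be full
`O`-lattices in `V` with `B` taking `O`-values on `S`, and let `S♯, G♯` be the
dual lattices. Then `G♯/S♯` is isomorphic, as an `O`-module with conjugate
scalar action, to `S/G`: there is an additive isomorphism `φ` with
`φ (c • x) = σ c • φ x`. -/
theorem stmt_16 (O F V : Type*) [CommRing O] [IsDomain O] [IsDedekindDomain O]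
    [Field F] [Algebra O F] [IsFractionRing O F]
    [AddCommGroup V] [Module F V] [Module O V] [IsScalarTower O F V]
    [FiniteDimensional F V]
    (σ : O ≃+* O) (hσ : ∀ c, σ (σ c) = c)
    (σF : F ≃+* F) (hσF : ∀ c, σF (σF c) = c)
    (hcompat : ∀ c : O, σF (algebraMap O F c) = algebraMap O F (σ c))
    (B : V → V → F)
    (hadd1 : ∀ x y z, B (x + y) z = B x z + B y z)
    (hadd2 : ∀ x y z, B x (y + z) = B x y + B x z)
    (hsmul1 : ∀ (c : F) (x y : V), B (c • x) y = c * B x y)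
    (hsmul2 : ∀ (c : F) (x y : V), B x (c • y) = σF c * B x y)
    (hherm : ∀ x y, σF (B x y) = B y x)
    (hnd : ∀ x, (∀ y, B x y = 0) → x = 0)
    (S G : Submodule O V) (hGS : G ≤ S) (hSfg : S.FG) (hGfg : G.FG)
    (hSfull : Submodule.span F (S : Set V) = ⊤)
    (hGfull : Submodule.span F (G : Set V) = ⊤)
    (hOval : ∀ x ∈ S, ∀ y ∈ S, B x y ∈ (algebraMap O F).range)
    (Sd Gd : Submodule O V)
    (hSd : ∀ x : V, x ∈ Sd ↔ ∀ y ∈ S, B x y ∈ (algebraMap O F).range)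
    (hGd : ∀ x : V, x ∈ Gd ↔ ∀ y ∈ G, B x y ∈ (algebraMap O F).range) :
    ∃ φ : (↥Gd ⧸ Submodule.comap Gd.subtype Sd) ≃+
        (↥S ⧸ Submodule.comap S.subtype G),
      ∀ (c : O) (x : ↥Gd ⧸ Submodule.comap Gd.subtype Sd),
        φ (c • x) = σ c • φ x := by
  classical
  set A := algebraMap O F with hA
  have hAinj : Function.Injective A := IsFractionRing.injective O F
  -- basic form lemmas
  have hB02 : ∀ x, B x 0 = 0 := by
    intro x
    have h := hadd2 x 0 0
    rw [add_zero] at h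
    exact (left_eq_add.mp h)
  have hB01 : ∀ y, B 0 y = 0 := by
    intro y
    have h := hadd1 0 0 y
    rw [add_zero] at h
    exact (left_eq_add.mp h)
  have hBO : ∀ (x : V) (o : O) (y : V), B x (o • y) = A (σ o) * B x y := by
    intro x o y
    rw [← algebraMap_smul F o y, hsmul2, hcompat]
  -- common denominator towards G
  have hOsmulG : ∀ (o : O) (y : V), y ∈ G → A o • y ∈ G := by
    intro o y hy
    rw [algebraMap_smul]
    exact G.smul_mem o hy
  have hdeno : ∀ x : V, ∃ c : O, c ≠ 0 ∧ A c • x ∈ G := by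
    intro x
    have hx : x ∈ Submodule.span F (G : Set V) := hGfull ▸ Submodule.mem_top
    induction hx using Submodule.span_induction with
    | mem y hy => exact ⟨1, one_ne_zero, by rw [map_one, one_smul]; exact hy⟩
    | zero => exact ⟨1, one_ne_zero, by rw [smul_zero]; exact G.zero_mem⟩
    | add y z _ _ hy hz =>
      obtain ⟨c1, hc1, hyc⟩ := hy
      obtain ⟨c2, hc2, hzc⟩ := hz
      refine ⟨c1 * c2, mul_ne_zero hc1 hc2, ?_⟩
      rw [smul_add]
      refine add_mem ?_ ?_
      · rw [mul_comm, map_mul, mul_smul]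
        exact hOsmulG c2 _ hyc
      · rw [map_mul, mul_smul]
        exact hOsmulG c1 _ hzc
    | smul a y _ hy =>
      obtain ⟨c, hc, hyc⟩ := hy
      obtain ⟨⟨p, q⟩, hpq⟩ := IsLocalization.surj (nonZeroDivisors O) a
      refine ⟨c * q, mul_ne_zero hc (nonZeroDivisors.ne_zero q.2), ?_⟩
      have h1 : A (c * q) • a • y = A p • (A c • y) := by
        rw [smul_smul, smul_smul, map_mul]
        congr 1
        calc A c * A ↑q * a = A c * (a * A ↑q) := by ring
        _ = A c * A p := by rw [hpq]
        _ = A p * A c := by ring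
      rw [h1]
      exact hOsmulG p _ hyc
  obtain ⟨X, hX⟩ := hSfg
  have hdenoX := fun (x : {y // y ∈ X}) => hdeno x
  choose cf hcfne hcfG using hdenoX
  set d : O := ∏ x ∈ X.attach, cf x with hd_def
  have hdne : d ≠ 0 := Finset.prod_ne_zero_iff.mpr fun x _ => hcfne x
  have hd : ∀ y ∈ S, A d • y ∈ G := by
    intro y hy
    rw [← hX] at hy
    induction hy using Submodule.span_induction with
    | mem z hz =>
      have h1 : d = cf ⟨z, hz⟩ * ∏ x ∈ X.attach.erase ⟨z, hz⟩, cf x :=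
        (Finset.mul_prod_erase X.attach cf (Finset.mem_attach X ⟨z, hz⟩)).symm
      rw [h1, mul_comm, map_mul, mul_smul]
      exact hOsmulG _ _ (hcfG ⟨z, hz⟩)
    | zero => rw [smul_zero]; exact G.zero_mem
    | add y z _ _ hy hz => rw [smul_add]; exact add_mem hy hz
    | smul o y _ hy =>
      have h1 : A d • o • y = o • (A d • y) := by
        rw [← algebraMap_smul F o y, smul_smul, ← algebraMap_smul F o (A d • y), smul_smul,
          mul_comm]
      rw [h1]
      exact G.smul_mem o hy
  set e : O := d * σ d with he_def
  have hσd : σ d ≠ 0 := fun h => hdne (by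
    have := congrArg σ h
    rw [hσ, map_zero] at this
    exact this)
  have he0 : e ≠ 0 := mul_ne_zero hdne hσd
  have hσe : σ e = e := by rw [he_def, map_mul, hσ, mul_comm]
  have heS : ∀ y ∈ S, A e • y ∈ G := by
    intro y hy
    rw [he_def, mul_comm, map_mul, mul_smul]
    exact hOsmulG _ _ (hd y hy)
  -- the multiplicative set of elements coprime to e
  let T : Submonoid O :=
    { carrier := {t | IsCoprime t e ∧ t ∈ nonZeroDivisors O}
      one_mem' := ⟨isCoprime_one_left, Submonoid.one_mem _⟩
      mul_mem' := fun ha hb => ⟨IsCoprime.mul_left ha.1 hb.1, Submonoid.mul_mem _ ha.2 hb.2⟩ }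
  have hmemT : ∀ t : O, t ∈ T ↔ IsCoprime t e ∧ t ∈ nonZeroDivisors O := fun t => Iff.rfl
  have hT : T ≤ nonZeroDivisors O := fun t ht => ht.2
  have hσT : ∀ t ∈ T, σ t ∈ T := by
    intro t ht
    obtain ⟨⟨u, w, huw⟩, ht0⟩ := ht
    constructor
    · refine ⟨σ u, σ w, ?_⟩
      have h1 := congrArg σ huw
      rw [map_add, map_mul, map_mul, map_one, hσe] at h1
      exact h1
    · refine mem_nonZeroDivisors_of_ne_zero fun h0 => ?_
      exact nonZeroDivisors.ne_zero ht0 (by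
        have := congrArg σ h0
        rw [hσ, map_zero] at this
        exact this)
  -- the localization of O at T, as a subalgebra of F
  set O' : Subalgebra O F := Localization.subalgebra F T hT with hO'_def
  have memO' : ∀ x : F, x ∈ O' ↔ ∃ o t : O, t ∈ T ∧ x * A t = A o := by
    intro x
    constructor
    · rintro ⟨a, s, hs, rfl⟩
      exact ⟨a, s, hs, IsLocalization.mk'_spec F a ⟨s, hT hs⟩⟩
    · rintro ⟨o, t, ht, hot⟩
      exact ⟨o, t, ht, (IsLocalization.eq_mk'_iff_mul_eq).mpr hot⟩
  have hAO' : ∀ o : O, A o ∈ O' := fun o => Subalgebra.algebraMap_mem O' o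
  -- O' is a PID
  haveI hDed : IsDedekindDomain ↥O' := IsLocalization.isDedekindDomain O hT ↥O'
  haveI hPIR : IsPrincipalIdealRing ↥O' := by
    refine IsPrincipalIdealRing.of_finite_primes ?_
    have hfin1 : {p : Ideal O | p.IsPrime ∧ e ∈ p}.Finite := by
      have hne : Ideal.span ({e} : Set O) ≠ 0 := by
        rw [Ideal.zero_eq_bot, Ne, Ideal.span_singleton_eq_bot]
        exact he0
      have h2 := (Ideal.finite_factors hne).image
        (fun v : IsDedekindDomain.HeightOneSpectrum O => v.asIdeal)
      refine Set.Finite.subset h2 ?_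
      rintro p ⟨hp, hep⟩
      have hbot : p ≠ ⊥ := by
        intro h0
        rw [h0] at hep
        exact he0 (by simpa using hep)
      refine ⟨⟨p, hp, hbot⟩, ?_, rfl⟩
      rw [Set.mem_setOf_eq, Ideal.dvd_iff_le, Ideal.span_singleton_le_iff_mem]
      exact hep
    have hfin0 : {p : Ideal O | p.IsPrime ∧ Disjoint (T : Set O) ↑p}.Finite := by
      refine Set.Finite.subset (hfin1.union (Set.finite_singleton ⊥)) ?_
      rintro p ⟨hp, hdisj⟩
      by_cases hbot : p = ⊥
      · exact Or.inr hbot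
      refine Or.inl ⟨hp, ?_⟩
      by_contra hep
      have hmax : p.IsMaximal := Ideal.IsPrime.isMaximal hp hbot
      have hlt : p < p ⊔ Ideal.span {e} := by
        refine lt_of_le_of_ne le_sup_left fun hEq => hep ?_
        have : Ideal.span {e} ≤ p := by
          rw [hEq]
          exact le_sup_right
        exact this (Ideal.mem_span_singleton_self e)
      have htop : p ⊔ Ideal.span {e} = ⊤ := hmax.out.2 _ hlt
      have h1 : (1 : O) ∈ p ⊔ Ideal.span {e} := htop ▸ Submodule.mem_top
      obtain ⟨x, hxp, y, hy, hxy⟩ := Submodule.mem_sup.mp h1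
      obtain ⟨w, hw⟩ := Ideal.mem_span_singleton'.mp hy
      by_cases hx0 : x = 0
      · -- then e is a unit
        have hwe : w * e = 1 := by rw [hw, ← hxy, hx0, zero_add]
        obtain ⟨z, hzp, hz0⟩ := Submodule.exists_mem_ne_zero_of_ne_bot hbot
        have hzT : z ∈ T := ⟨⟨0, w, by rw [zero_mul, zero_add, hwe]⟩,
          mem_nonZeroDivisors_of_ne_zero hz0⟩
        exact Set.disjoint_left.mp hdisj hzT hzp
      · have hxT : x ∈ T := ⟨⟨1, w, by rw [one_mul, hw, hxy]⟩,
          mem_nonZeroDivisors_of_ne_zero hx0⟩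
        exact Set.disjoint_left.mp hdisj hxT hxp
    have hfin0' : Finite {p : Ideal O // p.IsPrime ∧ Disjoint (T : Set O) ↑p} := hfin0
    have h2 : Finite {p : Ideal ↥O' // p.IsPrime} :=
      Finite.of_equiv _ (IsLocalization.orderIsoOfPrime T ↥O').toEquiv.symm
    exact Set.finite_coe_iff.mp h2
  -- the involution on O'
  have hσ'mem : ∀ x : F, x ∈ O' → σF x ∈ O' := by
    intro x hx
    rw [memO'] at hx ⊢
    obtain ⟨o, t, ht, hot⟩ := hx
    refine ⟨σ o, σ t, hσT t ht, ?_⟩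
    have h1 := congrArg σF hot
    rw [map_mul, hcompat, hcompat] at h1
    exact h1
  let σ' : ↥O' ≃+* ↥O' :=
    { toFun := fun x => ⟨σF (x : F), hσ'mem _ x.2⟩
      invFun := fun x => ⟨σF (x : F), hσ'mem _ x.2⟩
      left_inv := fun x => Subtype.ext (hσF (x : F))
      right_inv := fun x => Subtype.ext (hσF (x : F))
      map_mul' := fun x y => Subtype.ext (map_mul σF (x : F) (y : F))
      map_add' := fun x y => Subtype.ext (map_add σF (x : F) (y : F)) }
  have hσ' : ∀ c, σ' (σ' c) = c := fun c => Subtype.ext (hσF c)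
  have hcompat' : ∀ c : ↥O', σF (algebraMap ↥O' F c) = algebraMap ↥O' F (σ' c) := fun c => rfl
  haveI hTow : IsScalarTower O ↥O' V := by
    constructor
    intro c x u
    show ((c • x : ↥O') : F) • u = c • (((x : ↥O') : F) • u)
    have h1 : ((c • x : ↥O') : F) = c • (x : F) := rfl
    rw [h1, Algebra.smul_def, mul_smul, algebraMap_smul]
  -- the lattices over O'
  set S' : Submodule ↥O' V := Submodule.span ↥O' (S : Set V) with hS'_def
  set G' : Submodule ↥O' V := Submodule.span ↥O' (G : Set V) with hG'_def
  have hGS' : G' ≤ S' := Submodule.span_mono hGS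
  have hSsubS' : ∀ x ∈ S, x ∈ S' := fun x hx => Submodule.subset_span hx
  have hGsubG' : ∀ x ∈ G, x ∈ G' := fun x hx => Submodule.subset_span hx
  have hS'fg : S'.FG := by
    refine ⟨X, ?_⟩
    rw [hS'_def, ← hX, Submodule.span_span_of_tower]
  have hS'full : Submodule.span F (S' : Set V) = ⊤ := by
    rw [hS'_def, Submodule.span_span_of_tower, hSfull]
  have hG'full : Submodule.span F (G' : Set V) = ⊤ := by
    rw [hG'_def, Submodule.span_span_of_tower, hGfull]
  -- O-multiples
  have hO'smul : ∀ (o : O) (z : V) (W : Submodule ↥O' V), z ∈ W → A o • z ∈ W := by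
    intro o z W hz
    exact W.smul_mem ⟨A o, hAO' o⟩ hz
  have hrangeO' : ∀ z : F, z ∈ (algebraMap ↥O' F).range ↔ z ∈ O' := by
    intro z
    constructor
    · rintro ⟨w, rfl⟩
      exact w.2
    · intro hz
      exact ⟨⟨z, hz⟩, rfl⟩
  have hArange : ∀ z : F, z ∈ (algebraMap O F).range → z ∈ O' := by
    rintro z ⟨o, rfl⟩
    exact hAO' o
  -- extension of dual bounds from O-lattices to their O'-spans
  have hdual_ext : ∀ (x : V) (W : Submodule O V), (∀ y ∈ W, B x y ∈ O') →
      ∀ y ∈ Submodule.span ↥O' (W : Set V), B x y ∈ O' := by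
    intro x W hW y hy
    induction hy using Submodule.span_induction with
    | mem z hz => exact hW z hz
    | zero => rw [hB02]; exact zero_mem _
    | add y z _ _ hy hz => rw [hadd2]; exact add_mem hy hz
    | smul c y _ hy =>
      show B x ((c : F) • y) ∈ O'
      rw [hsmul2]
      exact mul_mem (hσ'mem _ c.2) hy
  -- the dual lattices over O'
  let Sd' : Submodule ↥O' V :=
    { carrier := {x | ∀ y ∈ S', B x y ∈ O'}
      add_mem' := fun {x x'} hx hx' y hy => by rw [hadd1]; exact add_mem (hx y hy) (hx' y hy)
      zero_mem' := fun y hy => by rw [hB01]; exact zero_mem _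
      smul_mem' := fun c x hx y hy => by
        show B ((c : F) • x) y ∈ O'
        rw [hsmul1]
        exact mul_mem c.2 (hx y hy) }
  let Gd' : Submodule ↥O' V :=
    { carrier := {x | ∀ y ∈ G', B x y ∈ O'}
      add_mem' := fun {x x'} hx hx' y hy => by rw [hadd1]; exact add_mem (hx y hy) (hx' y hy)
      zero_mem' := fun y hy => by rw [hB01]; exact zero_mem _
      smul_mem' := fun c x hx y hy => by
        show B ((c : F) • x) y ∈ O'
        rw [hsmul1]
        exact mul_mem c.2 (hx y hy) }
  have hSd'mem : ∀ x : V, x ∈ Sd' ↔ ∀ y ∈ S', B x y ∈ O' := fun x => Iff.rfl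
  have hGd'mem : ∀ x : V, x ∈ Gd' ↔ ∀ y ∈ G', B x y ∈ O' := fun x => Iff.rfl
  have hSd' : ∀ x : V, x ∈ Sd' ↔ ∀ y ∈ S', B x y ∈ (algebraMap ↥O' F).range := by
    intro x
    rw [hSd'mem]
    exact forall₂_congr fun y hy => (hrangeO' _).symm
  have hGd' : ∀ x : V, x ∈ Gd' ↔ ∀ y ∈ G', B x y ∈ (algebraMap ↥O' F).range := by
    intro x
    rw [hGd'mem]
    exact forall₂_congr fun y hy => (hrangeO' _).symm
  -- transfer lemmas
  have hGdsubGd' : ∀ x ∈ Gd, x ∈ Gd' := by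
    intro x hx
    rw [hGd] at hx
    rw [hGd'mem]
    exact hdual_ext x G fun y hy => hArange _ (hx y hy)
  have hSdsubSd' : ∀ x ∈ Sd, x ∈ Sd' := by
    intro x hx
    rw [hSd] at hx
    rw [hSd'mem]
    exact hdual_ext x S fun y hy => hArange _ (hx y hy)
  have hshrink : ∀ (W : Submodule O V) (x : V), x ∈ Submodule.span ↥O' (W : Set V) →
      ∃ t ∈ T, A t • x ∈ W := by
    intro W x hx
    induction hx using Submodule.span_induction with
    | mem z hz => exact ⟨1, T.one_mem, by rw [map_one, one_smul]; exact hz⟩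
    | zero => exact ⟨1, T.one_mem, by rw [smul_zero]; exact W.zero_mem⟩
    | add y z _ _ hy hz =>
      obtain ⟨t1, ht1, hyt⟩ := hy
      obtain ⟨t2, ht2, hzt⟩ := hz
      refine ⟨t1 * t2, T.mul_mem ht1 ht2, ?_⟩
      rw [smul_add]
      refine add_mem ?_ ?_
      · rw [mul_comm, map_mul, mul_smul, algebraMap_smul]
        exact W.smul_mem t2 hyt
      · rw [map_mul, mul_smul, algebraMap_smul]
        exact W.smul_mem t1 hzt
    | smul c y _ hy =>
      obtain ⟨t, ht, hyt⟩ := hy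
      obtain ⟨o, s, hs, hos⟩ := (memO' (c : F)).mp c.2
      refine ⟨s * t, T.mul_mem hs ht, ?_⟩
      have h1 : A (s * t) • (c • y) = o • (A t • y) := by
        show A (s * t) • ((c : F) • y) = o • (A t • y)
        rw [← algebraMap_smul F o (A t • y), smul_smul, smul_smul, map_mul]
        congr 1
        calc A s * A t * (c : F) = ((c : F) * A s) * A t := by ring
        _ = A o * A t := by rw [hos]
      rw [h1]
      exact W.smul_mem o hyt
  have h_eG' : ∀ y ∈ S', A e • y ∈ G' := by
    intro y hy
    induction hy using Submodule.span_induction with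
    | mem z hz => exact hGsubG' _ (heS z hz)
    | zero => rw [smul_zero]; exact G'.zero_mem
    | add y z _ _ hy hz => rw [smul_add]; exact add_mem hy hz
    | smul c y _ hy =>
      have h1 : A e • (c • y) = c • (A e • y) := by
        show A e • ((c : F) • y) = (c : F) • (A e • y)
        rw [smul_smul, smul_smul, mul_comm]
      rw [h1]
      exact G'.smul_mem c hy
  have hsplit : ∀ (t : O), IsCoprime t e → ∀ (x : V) (W : Submodule O V),
      A t • x ∈ W → A e • x ∈ W → x ∈ W := by
    rintro t ⟨u, w, huw⟩ x W h1 h2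
    have hx : x = A u • (A t • x) + A w • (A e • x) := by
      rw [smul_smul, smul_smul, ← map_mul, ← map_mul, ← add_smul, ← map_add, huw, map_one,
        one_smul]
    rw [hx]
    refine add_mem ?_ ?_
    · rw [algebraMap_smul]; exact W.smul_mem u h1
    · rw [algebraMap_smul]; exact W.smul_mem w h2
  -- intersection lemmas
  have hGdSd'Sd : ∀ x : V, x ∈ Gd → x ∈ Sd' → x ∈ Sd := by
    intro x hxGd hxSd'
    rw [hSd]
    intro y hy
    obtain ⟨o, t, ht, hot⟩ := (memO' (B x y)).mp (hxSd' y (hSsubS' y hy))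
    obtain ⟨o1, ho1⟩ : B x (A d • y) ∈ (algebraMap O F).range := (hGd x).mp hxGd _ (hd y hy)
    have hAeB : A e * B x y = A d * A o1 := by
      rw [algebraMap_smul, hBO] at ho1
      rw [he_def, map_mul, mul_assoc, ← ho1]
    obtain ⟨⟨u, w, huw⟩, ht0⟩ := ht
    refine ⟨u * o + w * (d * o1), ?_⟩
    have h2 : (A u * A t + A w * A e) * B x y = B x y := by
      rw [← map_mul, ← map_mul, ← map_add, huw, map_one, one_mul]
    calc A (u * o + w * (d * o1)) = A u * A o + A w * (A d * A o1) := by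
          simp only [map_add, map_mul]
    _ = (A u * A t + A w * A e) * B x y := by
          rw [add_mul, mul_assoc, mul_comm (A t), hot, mul_assoc, hAeB]
    _ = B x y := h2
  have hSG'G : ∀ x : V, x ∈ S → x ∈ G' → x ∈ G := by
    intro x hxS hxG'
    obtain ⟨t, ht, hxt⟩ := hshrink G x hxG'
    exact hsplit t ht.1 x G hxt (heS x hxS)
  -- decomposition lemmas
  have hid : ∀ (u w t : O), u * t + w * e = 1 → ∀ x : V,
      x - A u • (A t • x) = A w • (A e • x) := by
    intro u w t huw x
    have hx : x = A u • (A t • x) + A w • (A e • x) := by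
      rw [smul_smul, smul_smul, ← map_mul, ← map_mul, ← add_smul, ← map_add, huw, map_one,
        one_smul]
    nth_rewrite 1 [hx]
    exact add_sub_cancel_left _ _
  have hS'decomp : ∀ x ∈ S', ∃ s, s ∈ S ∧ x - s ∈ G' := by
    intro x hx
    obtain ⟨t, ht, hxt⟩ := hshrink S x hx
    obtain ⟨u, w, huw⟩ := ht.1
    refine ⟨A u • (A t • x), ?_, ?_⟩
    · rw [algebraMap_smul]
      exact S.smul_mem u hxt
    · rw [hid u w t huw x]
      exact hO'smul w _ G' (h_eG' x hx)
  have hGdshrink : ∀ x ∈ Gd', ∃ t ∈ T, A t • x ∈ Gd := by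
    intro x hx
    obtain ⟨Y, hY⟩ := hGfg
    have hBxy : ∀ y : {z // z ∈ Y}, ∃ o t : O, t ∈ T ∧ B x (y : V) * A t = A o := by
      intro y
      refine (memO' _).mp (hx (y : V) (hGsubG' _ ?_))
      rw [← hY]
      exact Submodule.subset_span y.2
    choose of tf htf hotf using hBxy
    refine ⟨∏ y ∈ Y.attach, tf y, prod_mem fun y _ => htf y, ?_⟩
    set t : O := ∏ y ∈ Y.attach, tf y with ht_def
    rw [hGd]
    intro z hz
    rw [← hY] at hz
    induction hz using Submodule.span_induction with
    | mem z' hz' =>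
      have h1 : t = tf ⟨z', hz'⟩ * ∏ y ∈ Y.attach.erase ⟨z', hz'⟩, tf y :=
        (Finset.mul_prod_erase Y.attach tf (Finset.mem_attach Y ⟨z', hz'⟩)).symm
      refine ⟨(∏ y ∈ Y.attach.erase ⟨z', hz'⟩, tf y) * of ⟨z', hz'⟩, ?_⟩
      rw [hsmul1, h1, map_mul, map_mul]
      calc A (∏ y ∈ Y.attach.erase ⟨z', hz'⟩, tf y) * A (of ⟨z', hz'⟩)
          = A (∏ y ∈ Y.attach.erase ⟨z', hz'⟩, tf y) * (B x z' * A (tf ⟨z', hz'⟩)) := by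
            rw [hotf ⟨z', hz'⟩]
      _ = A (tf ⟨z', hz'⟩) * A (∏ y ∈ Y.attach.erase ⟨z', hz'⟩, tf y) * B x z' := by ring
    | zero => exact ⟨0, by rw [hB02, map_zero]⟩
    | add y z _ _ hy hz =>
      obtain ⟨oy, hoy⟩ := hy
      obtain ⟨oz, hoz⟩ := hz
      exact ⟨oy + oz, by rw [hadd2, map_add, hoy, hoz]⟩
    | smul o z _ hz =>
      obtain ⟨oz, hoz⟩ := hz
      exact ⟨σ o * oz, by rw [hBO, map_mul, hoz]⟩
  have hGd'decomp : ∀ x ∈ Gd', ∃ g, g ∈ Gd ∧ x - g ∈ Sd' := by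
    intro x hx
    obtain ⟨t, ht, hxt⟩ := hGdshrink x hx
    obtain ⟨u, w, huw⟩ := ht.1
    have hxe : A e • x ∈ Sd' := by
      rw [hSd'mem]
      intro y hy
      have h1 : B x (A e • y) ∈ O' := hx _ (h_eG' y hy)
      rw [hsmul2, hcompat, hσe] at h1
      rw [hsmul1]
      exact h1
    refine ⟨A u • (A t • x), ?_, ?_⟩
    · rw [algebraMap_smul]
      exact Gd.smul_mem u hxt
    · rw [hid u w t huw x]
      exact hO'smul w _ Sd' hxe
  -- quotient comparison maps
  set K : Submodule O ↥Gd := Submodule.comap Gd.subtype Sd with hK_def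
  set K' : Submodule ↥O' ↥Gd' := Submodule.comap Gd'.subtype Sd' with hK'_def
  set Gq : Submodule O ↥S := Submodule.comap S.subtype G with hGq_def
  set Gq' : Submodule ↥O' ↥S' := Submodule.comap S'.subtype G' with hGq'_def
  have hcoeA : ∀ c : O, ((algebraMap O ↥O' c : ↥O') : F) = A c := fun c => rfl
  let f₁ : ↥Gd →ₛₗ[algebraMap O ↥O'] (↥Gd' ⧸ K') :=
    { toFun := fun x => Submodule.Quotient.mk ⟨(x : V), hGdsubGd' _ x.2⟩
      map_add' := fun x y => by
        rw [← Submodule.Quotient.mk_add]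
        rfl
      map_smul' := fun c x => by
        rw [← Submodule.Quotient.mk_smul]
        refine congrArg Submodule.Quotient.mk (Subtype.ext ?_)
        show c • (x : V) = ((algebraMap O ↥O' c : ↥O') : F) • (x : V)
        rw [hcoeA, algebraMap_smul] }
  have hf₁ : ∀ x : ↥Gd, f₁ x = Submodule.Quotient.mk ⟨(x : V), hGdsubGd' _ x.2⟩ :=
    fun x => rfl
  have hker₁ : ∀ x : ↥Gd, f₁ x = 0 ↔ x ∈ K := by
    intro x
    rw [hf₁, Submodule.Quotient.mk_eq_zero]
    constructor
    · intro h
      exact hGdSd'Sd _ x.2 h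
    · intro h
      exact hSdsubSd' _ h
  have hleK : K ≤ LinearMap.ker f₁ := fun x hx => (hker₁ x).mpr hx
  let L₁ := Submodule.liftQ K f₁ hleK
  have hL₁mk : ∀ x : ↥Gd, L₁ (Submodule.Quotient.mk x) = f₁ x := fun x => rfl
  have hL₁inj : Function.Injective L₁ := by
    intro p q hpq
    obtain ⟨xp, rfl⟩ := Submodule.Quotient.mk_surjective _ p
    obtain ⟨xq, rfl⟩ := Submodule.Quotient.mk_surjective _ q
    rw [hL₁mk, hL₁mk] at hpq
    rw [Submodule.Quotient.eq]
    apply (hker₁ _).mp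
    rw [LinearMap.map_sub, hpq, sub_self]
  have hL₁surj : Function.Surjective L₁ := by
    intro q
    obtain ⟨y, rfl⟩ := Submodule.Quotient.mk_surjective _ q
    obtain ⟨g, hgGd, hsub⟩ := hGd'decomp (y : V) y.2
    refine ⟨Submodule.Quotient.mk ⟨g, hgGd⟩, ?_⟩
    rw [hL₁mk, hf₁, Submodule.Quotient.eq]
    show (⟨g, hGdsubGd' _ hgGd⟩ - y : ↥Gd') ∈ K'
    have h1 : ((⟨g, hGdsubGd' _ hgGd⟩ - y : ↥Gd') : V) = -((y : V) - g) := by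
      rw [AddSubgroupClass.coe_sub, neg_sub]
    show (((⟨g, hGdsubGd' _ hgGd⟩ - y : ↥Gd') : V)) ∈ Sd'
    rw [h1]
    exact neg_mem hsub
  let f₂ : ↥S →ₛₗ[algebraMap O ↥O'] (↥S' ⧸ Gq') :=
    { toFun := fun x => Submodule.Quotient.mk ⟨(x : V), hSsubS' _ x.2⟩
      map_add' := fun x y => by
        rw [← Submodule.Quotient.mk_add]
        rfl
      map_smul' := fun c x => by
        rw [← Submodule.Quotient.mk_smul]
        refine congrArg Submodule.Quotient.mk (Subtype.ext ?_)
        show c • (x : V) = ((algebraMap O ↥O' c : ↥O') : F) • (x : V)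
        rw [hcoeA, algebraMap_smul] }
  have hf₂ : ∀ x : ↥S, f₂ x = Submodule.Quotient.mk ⟨(x : V), hSsubS' _ x.2⟩ :=
    fun x => rfl
  have hker₂ : ∀ x : ↥S, f₂ x = 0 ↔ x ∈ Gq := by
    intro x
    rw [hf₂, Submodule.Quotient.mk_eq_zero]
    constructor
    · intro h
      exact hSG'G _ x.2 h
    · intro h
      exact hGsubG' _ h
  have hleGq : Gq ≤ LinearMap.ker f₂ := fun x hx => (hker₂ x).mpr hx
  let L₂ := Submodule.liftQ Gq f₂ hleGq
  have hL₂mk : ∀ x : ↥S, L₂ (Submodule.Quotient.mk x) = f₂ x := fun x => rfl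
  have hL₂inj : Function.Injective L₂ := by
    intro p q hpq
    obtain ⟨xp, rfl⟩ := Submodule.Quotient.mk_surjective _ p
    obtain ⟨xq, rfl⟩ := Submodule.Quotient.mk_surjective _ q
    rw [hL₂mk, hL₂mk] at hpq
    rw [Submodule.Quotient.eq]
    apply (hker₂ _).mp
    rw [LinearMap.map_sub, hpq, sub_self]
  have hL₂surj : Function.Surjective L₂ := by
    intro q
    obtain ⟨y, rfl⟩ := Submodule.Quotient.mk_surjective _ q
    obtain ⟨s, hsS, hsub⟩ := hS'decomp (y : V) y.2
    refine ⟨Submodule.Quotient.mk ⟨s, hsS⟩, ?_⟩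
    rw [hL₂mk, hf₂, Submodule.Quotient.eq]
    show (((⟨s, hSsubS' _ hsS⟩ - y : ↥S') : V)) ∈ G'
    have h1 : ((⟨s, hSsubS' _ hsS⟩ - y : ↥S') : V) = -((y : V) - s) := by
      rw [AddSubgroupClass.coe_sub, neg_sub]
    rw [h1]
    exact neg_mem hsub
  -- assemble
  let E₁ : (↥Gd ⧸ K) ≃+ (↥Gd' ⧸ K') := AddEquiv.ofBijective L₁ ⟨hL₁inj, hL₁surj⟩
  let E₂ : (↥S ⧸ Gq) ≃+ (↥S' ⧸ Gq') := AddEquiv.ofBijective L₂ ⟨hL₂inj, hL₂surj⟩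
  have hE₁ : ∀ (c : O) (x : ↥Gd ⧸ K), E₁ (c • x) = algebraMap O ↥O' c • E₁ x := by
    intro c x
    show L₁ (c • x) = algebraMap O ↥O' c • L₁ x
    rw [LinearMap.map_smulₛₗ]
  have hE₂ : ∀ (c : O) (x : ↥S ⧸ Gq), E₂ (c • x) = algebraMap O ↥O' c • E₂ x := by
    intro c x
    show L₂ (c • x) = algebraMap O ↥O' c • L₂ x
    rw [LinearMap.map_smulₛₗ]
  have hσ'A : ∀ c : O, σ' (algebraMap O ↥O' c) = algebraMap O ↥O' (σ c) := by
    intro c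
    apply Subtype.ext
    show σF ((algebraMap O ↥O' c : ↥O') : F) = ((algebraMap O ↥O' (σ c) : ↥O') : F)
    rw [hcoeA, hcoeA, hcompat]
  obtain ⟨φ', hφ'⟩ := stmt_core ↥O' F V σ' hσ' σF hcompat' B hadd1 hadd2 hsmul1 hsmul2 hnd
    S' G' hGS' hS'fg hS'full hG'full Sd' Gd' hSd' hGd'
  refine ⟨E₁.trans (φ'.trans E₂.symm), ?_⟩
  intro c x
  show E₂.symm (φ' (E₁ (c • x))) = σ c • E₂.symm (φ' (E₁ x))
  rw [hE₁, hφ', hσ'A]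
  apply E₂.injective
  rw [AddEquiv.apply_symm_apply, hE₂, AddEquiv.apply_symm_apply]
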